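/- Let m ≥ 3. The complete sun KS_m (obtained from the complete graph K_m on vertices u₁, …, u_m by adding new vertices v₁, …, v_m with each u_i adjacent to v_{i−1} and v_i, indices taken modulo m) satisfies η(KS_m) = ⌈(m + 2)/3⌉. -/

import Mathlib

open Classical in
/-- Sum of the labels `f` over the open neighborhood of `v` in `G`. -/
noncomputable def nbrSum {V : Type*} [Fintype V] (G : SimpleGraph V) (f : V → ℕ) (v : V) : ℕ :=
  ∑ w ∈ Finset.univ.filter (fun w => G.Adj v w), f w

open Classical in
/-- The degree of `v` in `G`. -/
noncomputable def deg {V : Type*} [Fintype V] (G : SimpleGraph V) (v : V) : ℕ :=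
  (Finset.univ.filter (fun w => G.Adj v w)).card

/-- `f : V → {1,…,k}` is an additive `k`-coloring of `G`: labels lie in `{1,…,k}` and
adjacent vertices get distinct open-neighborhood sums. -/
def IsAdditiveColoring {V : Type*} [Fintype V] (G : SimpleGraph V) (k : ℕ) (f : V → ℕ) : Prop :=
  (∀ v, 1 ≤ f v ∧ f v ≤ k) ∧ ∀ u v, G.Adj u v → nbrSum G f u ≠ nbrSum G f v

/-- The additive chromatic number `η(G)`: the least `k` admitting an additive `k`-coloring. -/
noncomputable def eta {V : Type*} [Fintype V] (G : SimpleGraph V) : ℕ :=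
  sInf {k | ∃ f : V → ℕ, IsAdditiveColoring G k f}

/-- The complete sun `KS_m`: `Sum.inl i` is `uᵢ`, `Sum.inr i` is `vᵢ`;
the `uᵢ` form a complete graph `K_m`, and `uᵢ` is adjacent to `vᵢ` and `v_{i-1}`
(indices mod `m`). -/
def completeSun (m : ℕ) : SimpleGraph (Fin m ⊕ Fin m) where
  Adj x y :=
    match x, y with
    | Sum.inl i, Sum.inl j => i ≠ j
    | Sum.inl i, Sum.inr j => j = i ∨ (j.val + 1) % m = i.val
    | Sum.inr j, Sum.inl i => j = i ∨ (j.val + 1) % m = i.val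
    | Sum.inr _, Sum.inr _ => False
  symm := by
    constructor
    rintro (i | i) (j | j) h
    · exact fun e => h e.symm
    · exact h
    · exact h
    · exact h.elim
  loopless := by
    constructor
    rintro (i | i) h
    · exact h rfl
    · exact h

lemma mod_prev (m i : ℕ) (hm : 1 ≤ m) (h : i < m) :
    (i + m - 1) % m = if i = 0 then m - 1 else i - 1 := by
  split_ifs with h0
  · rw [h0]
    show (0 + m - 1) % m = m - 1
    rw [Nat.zero_add]
    exact Nat.mod_eq_of_lt (by omega)
  · have : i + m - 1 = (i - 1) + m := by omega
    rw [this, Nat.add_mod_right, Nat.mod_eq_of_lt (by omega)]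

lemma mod_succ (m j : ℕ) (h : j < m) :
    (j + 1) % m = if j + 1 = m then 0 else j + 1 := by
  split_ifs with h0
  · simp [h0]
  · exact Nat.mod_eq_of_lt (by omega)

lemma nbrSum_inl {m : ℕ} (hm : 3 ≤ m) (f : Fin m ⊕ Fin m → ℕ) (i : Fin m) :
    f (Sum.inl i) + nbrSum (completeSun m) f (Sum.inl i)
      = (∑ j : Fin m, f (Sum.inl j)) + f (Sum.inr i)
        + f (Sum.inr ⟨(i.val + m - 1) % m, Nat.mod_lt _ (by omega)⟩) := by
  classical
  set p : Fin m := ⟨(i.val + m - 1) % m, Nat.mod_lt _ (by omega)⟩ with hp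
  have hpv : (p : ℕ) = if (i : ℕ) = 0 then m - 1 else (i : ℕ) - 1 := mod_prev m i (by omega) i.isLt
  have hip : i ≠ p := by
    intro h
    have hv := congrArg Fin.val h
    rw [hpv] at hv
    have hlt := i.isLt
    split_ifs at hv <;> omega
  unfold nbrSum
  rw [Finset.sum_filter, Fintype.sum_sum_type]
  have h1 : (∑ j : Fin m, if (completeSun m).Adj (Sum.inl i) (Sum.inl j) then f (Sum.inl j) else 0)
      = ∑ j ∈ Finset.univ.erase i, f (Sum.inl j) := by
    have he : ∀ j : Fin m, ((completeSun m).Adj (Sum.inl i) (Sum.inl j)) = (i ≠ j) := fun j => rfl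
    simp only [he]
    rw [← Finset.sum_filter, Finset.filter_ne]
  have h2 : (∑ j : Fin m, if (completeSun m).Adj (Sum.inl i) (Sum.inr j) then f (Sum.inr j) else 0)
      = f (Sum.inr i) + f (Sum.inr p) := by
    have he : ∀ j : Fin m, ((completeSun m).Adj (Sum.inl i) (Sum.inr j))
        = (j = i ∨ ((j : ℕ) + 1) % m = (i : ℕ)) := fun j => rfl
    have hcond : ∀ j : Fin m, ((j = i ∨ ((j : ℕ) + 1) % m = (i : ℕ))) ↔ (j = i ∨ j = p) := by
      intro j
      have hjv : ((j : ℕ) + 1) % m = if (j : ℕ) + 1 = m then 0 else (j : ℕ) + 1 :=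
        mod_succ m j j.isLt
      constructor
      · rintro (h | h)
        · exact Or.inl h
        · refine Or.inr (Fin.ext ?_)
          rw [hpv]
          have := i.isLt; have := j.isLt
          split_ifs at hjv ⊢ <;> omega
      · rintro (h | h)
        · exact Or.inl h
        · refine Or.inr ?_
          have hv := congrArg Fin.val h
          rw [hpv] at hv
          have := i.isLt; have := j.isLt
          split_ifs at hjv hv <;> omega
    simp only [he, hcond]
    have : Finset.univ.filter (fun j : Fin m => j = i ∨ j = p) = {i, p} := by
      ext j; simp
    rw [← Finset.sum_filter, this, Finset.sum_pair hip]
  rw [h1, h2, ← Finset.add_sum_erase Finset.univ (fun j => f (Sum.inl j)) (Finset.mem_univ i)]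
  ring

lemma nbrSum_inr {m : ℕ} (hm : 3 ≤ m) (f : Fin m ⊕ Fin m → ℕ) (j : Fin m) :
    nbrSum (completeSun m) f (Sum.inr j)
      = f (Sum.inl j) + f (Sum.inl ⟨((j : ℕ) + 1) % m, Nat.mod_lt _ (by omega)⟩) := by
  classical
  set q : Fin m := ⟨((j : ℕ) + 1) % m, Nat.mod_lt _ (by omega)⟩ with hq
  have hqv : (q : ℕ) = if (j : ℕ) + 1 = m then 0 else (j : ℕ) + 1 := mod_succ m j j.isLt
  have hjq : j ≠ q := by
    intro h
    have hv := congrArg Fin.val h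
    rw [hqv] at hv
    have hlt := j.isLt
    split_ifs at hv <;> omega
  unfold nbrSum
  rw [Finset.sum_filter, Fintype.sum_sum_type]
  have h2 : (∑ i : Fin m, if (completeSun m).Adj (Sum.inr j) (Sum.inr i) then f (Sum.inr i) else 0)
      = 0 := by
    have he : ∀ i : Fin m, ((completeSun m).Adj (Sum.inr j) (Sum.inr i)) = False := fun i => rfl
    simp [he]
  have h1 : (∑ i : Fin m, if (completeSun m).Adj (Sum.inr j) (Sum.inl i) then f (Sum.inl i) else 0)
      = f (Sum.inl j) + f (Sum.inl q) := by
    have he : ∀ i : Fin m, ((completeSun m).Adj (Sum.inr j) (Sum.inl i))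
        = (j = i ∨ ((j : ℕ) + 1) % m = (i : ℕ)) := fun i => rfl
    have hcond : ∀ i : Fin m, ((j = i ∨ ((j : ℕ) + 1) % m = (i : ℕ))) ↔ (i = j ∨ i = q) := by
      intro i
      have := i.isLt; have := j.isLt
      constructor
      · rintro (h | h)
        · exact Or.inl h.symm
        · exact Or.inr (Fin.ext (by rw [← h, hqv, mod_succ m j j.isLt]))
      · rintro (h | h)
        · exact Or.inl h.symm
        · refine Or.inr ?_
          have hv := congrArg Fin.val h
          rw [hqv] at hv
          rw [mod_succ m j j.isLt]
          split_ifs at hv ⊢ <;> omega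
    simp only [he, hcond]
    have : Finset.univ.filter (fun i : Fin m => i = j ∨ i = q) = {j, q} := by
      ext i; simp
    rw [← Finset.sum_filter, this, Finset.sum_pair hjq]
  rw [h1, h2, Nat.add_zero]

def aF (k i : ℕ) : ℕ := if i < k then k else if i ≤ 2*k-2 then k-1 else 3*k-2-i
def bF (k i : ℕ) : ℕ := min (i/2+1) k
def tN (k i : ℕ) : ℕ := if i = 0 then k+1 else if i < k then i+1 else i+2

lemma aF_bound {m k i : ℕ} (hm : 3 ≤ m) (hk1 : m + 2 ≤ 3*k) (hi : i < m) :
    1 ≤ aF k i ∧ aF k i ≤ k := by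
  unfold aF; split_ifs <;> omega

lemma bF_bound {k : ℕ} (hk : 1 ≤ k) (i : ℕ) : 1 ≤ bF k i ∧ bF k i ≤ k := by
  unfold bF; omega

lemma tN_inj {k i j : ℕ} (hk : 2 ≤ k) (hij : i ≠ j) : tN k i ≠ tN k j := by
  unfold tN; split_ifs <;> omega

lemma val_lemma {m k i : ℕ} (hm : 3 ≤ m) (hk1 : m + 2 ≤ 3*k) (hk2 : 3*k ≤ m + 4)
    (hi : i < m) :
    bF k i + bF k ((i + m - 1) % m) + k = tN k i + aF k i := by
  have hk0 : 2 ≤ k := by omega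
  rw [mod_prev m i (by omega) hi]
  unfold aF bF tN
  split_ifs <;> omega

lemma key_inj {m k i j : ℕ} (hm : 3 ≤ m) (hk1 : m + 2 ≤ 3*k) (hk2 : 3*k ≤ m + 4)
    (hi : i < m) (hj : j < m) (hij : i ≠ j) :
    aF k i + bF k j + bF k ((j + m - 1) % m) ≠ aF k j + bF k i + bF k ((i + m - 1) % m) := by
  have hvi := val_lemma hm hk1 hk2 hi
  have hvj := val_lemma hm hk1 hk2 hj
  have := tN_inj (k := k) (by omega) hij
  omega

lemma sumA {m k : ℕ} (hm : 3 ≤ m) (hk1 : m + 2 ≤ 3*k) (hk2 : 3*k ≤ m + 4) :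
    3*k - 1 ≤ ∑ i : Fin m, aF k i.val := by
  classical
  have hk0 : 2 ≤ k := by omega
  set i0 : Fin m := ⟨0, by omega⟩
  set i1 : Fin m := ⟨1, by omega⟩
  have h01 : i1 ∈ Finset.univ.erase i0 := by
    rw [Finset.mem_erase]
    exact ⟨by intro h; exact absurd (congrArg Fin.val h) (by simp [i0, i1]), Finset.mem_univ _⟩
  rw [← Finset.add_sum_erase Finset.univ _ (Finset.mem_univ i0),
      ← Finset.add_sum_erase _ _ h01]
  have hc : ((Finset.univ.erase i0).erase i1).card = m - 2 := by
    rw [Finset.card_erase_of_mem h01, Finset.card_erase_of_mem (Finset.mem_univ i0),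
        Finset.card_univ, Fintype.card_fin]
    omega
  have hrest : m - 2 ≤ ∑ i ∈ (Finset.univ.erase i0).erase i1, aF k i.val := by
    rw [← hc]
    have := Finset.card_nsmul_le_sum ((Finset.univ.erase i0).erase i1)
      (fun i : Fin m => aF k i.val) 1
      (fun x _ => (aF_bound hm hk1 x.isLt).1)
    simpa using this
  have h0 : aF k (i0 : ℕ) = k := by simp only [aF, i0]; split_ifs <;> omega
  have h1 : aF k (i1 : ℕ) = k := by simp only [aF, i1]; split_ifs <;> omega
  omega


lemma exists_coloring {m k : ℕ} (hm : 3 ≤ m) (hk1 : m + 2 ≤ 3*k) (hk2 : 3*k ≤ m + 4) :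
    ∃ f, IsAdditiveColoring (completeSun m) k f := by
  classical
  have hk0 : 2 ≤ k := by omega
  set f : Fin m ⊕ Fin m → ℕ :=
    Sum.elim (fun i : Fin m => aF k i.val) (fun i : Fin m => bF k i.val) with hf
  have e1 : ∀ x : Fin m, f (Sum.inl x) = aF k x.val := fun _ => rfl
  have e2 : ∀ x : Fin m, f (Sum.inr x) = bF k x.val := fun _ => rfl
  have eT : ∑ x : Fin m, f (Sum.inl x) = ∑ x : Fin m, aF k x.val :=
    Finset.sum_congr rfl (fun x _ => e1 x)
  refine ⟨f, fun v => ?_, fun u v huv => ?_⟩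
  · rcases v with i | i
    · simpa [hf] using aF_bound hm hk1 i.isLt
    · simpa [hf] using bF_bound (by omega) i.val
  · rcases u with i | i <;> rcases v with j | j
    · -- inl inl
      have hij : i ≠ j := huv
      have Hi := nbrSum_inl hm f i
      have Hj := nbrSum_inl hm f j
      simp only [e1, e2, eT] at Hi Hj
      have hkey := key_inj hm hk1 hk2 i.isLt j.isLt (fun h => hij (Fin.ext h))
      intro heq
      omega
    · -- inl inr
      have Hi := nbrSum_inl hm f i
      have Hj := nbrSum_inr hm f j
      have hT := sumA hm hk1 hk2
      simp only [e1, e2, eT] at Hi Hj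
      have hai := (aF_bound hm hk1 i.isLt).2
      have haj := (aF_bound hm hk1 j.isLt).2
      have haq := (aF_bound hm hk1 (Nat.mod_lt ((j : ℕ)+1) (show 0 < m by omega))).2
      have hbi := (bF_bound (show 1 ≤ k by omega) (i : ℕ)).1
      have hbp := (bF_bound (show 1 ≤ k by omega) (((i : ℕ) + m - 1) % m)).1
      omega
    · -- inr inl
      have Hi := nbrSum_inr hm f i
      have Hj := nbrSum_inl hm f j
      have hT := sumA hm hk1 hk2
      simp only [e1, e2, eT] at Hi Hj
      have hai := (aF_bound hm hk1 i.isLt).2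
      have haj := (aF_bound hm hk1 j.isLt).2
      have haq := (aF_bound hm hk1 (Nat.mod_lt ((i : ℕ)+1) (show 0 < m by omega))).2
      have hbj := (bF_bound (show 1 ≤ k by omega) (j : ℕ)).1
      have hbp := (bF_bound (show 1 ≤ k by omega) (((j : ℕ) + m - 1) % m)).1
      omega
    · exact (huv : False).elim

lemma coloring_lb {m k : ℕ} (hm : 3 ≤ m) {f : Fin m ⊕ Fin m → ℕ}
    (hf : IsAdditiveColoring (completeSun m) k f) : m + 2 ≤ 3 * k := by
  classical
  obtain ⟨hb, hs⟩ := hf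
  set ψ : Fin m → ℤ :=
    fun i => (nbrSum (completeSun m) f (Sum.inl i) : ℤ) - ∑ j : Fin m, f (Sum.inl j) with hψ
  have hmem : ∀ i : Fin m, ψ i ∈ Finset.Icc (2 - (k:ℤ)) (2*k - 1) := by
    intro i
    have Hi := nbrSum_inl hm f i
    have h1 := hb (Sum.inl i)
    have h2 := hb (Sum.inr i)
    have h3 := hb (Sum.inr ⟨((i : ℕ) + m - 1) % m, Nat.mod_lt _ (by omega)⟩)
    rw [Finset.mem_Icc]
    simp only [hψ]
    omega
  have hinj : Function.Injective ψ := by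
    intro i j heq
    by_contra hne
    have hSS : nbrSum (completeSun m) f (Sum.inl i) = nbrSum (completeSun m) f (Sum.inl j) := by
      simp only [hψ] at heq
      omega
    exact hs (Sum.inl i) (Sum.inl j) (hne : i ≠ j) hSS
  have hcard := Finset.card_le_card_of_injOn (s := (Finset.univ : Finset (Fin m))) ψ (fun x _ => hmem x) hinj.injOn
  rw [Finset.card_univ, Fintype.card_fin, Int.card_Icc] at hcard
  omega


/-- For `m ≥ 3`, the complete sun `KS_m` satisfies `η(KS_m) = ⌈(m + 2)/3⌉`. -/
theorem eta_completeSun (m : ℕ) (hm : 3 ≤ m) :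
    eta (completeSun m) = (m + 2) ⌈/⌉ 3 := by
  have hceil : (m + 2) ⌈/⌉ 3 = (m + 4) / 3 := by
    rw [Nat.ceilDiv_eq_add_pred_div]
    omega
  set k := (m + 4) / 3 with hk
  have hk1 : m + 2 ≤ 3 * k := by omega
  have hk2 : 3 * k ≤ m + 4 := by omega
  obtain ⟨f, hf⟩ := exists_coloring hm hk1 hk2
  rw [hceil]
  unfold eta
  apply le_antisymm
  · exact Nat.sInf_le ⟨f, hf⟩
  · exact le_csInf ⟨k, f, hf⟩ (fun b hb => by
      obtain ⟨g, hg⟩ := hb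
      have := coloring_lb hm hg
      omega)
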